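/- Variation of the discrete action (Equation 13): the discrete action S_d is differentiable at every configuration q = (q_0,…,q_N), and for every variation δ = (δ_0,…,δ_N) with δ_0 = 0 and δ_N = 0, its derivative is given by DS_d(q)(δ) = Σ_{n=1}^{N−1} [ D₁L_d(q_n, q_{n+1})(δ_n) + D₂L_d(q_{n−1}, q_n)(δ_n) − λ_n · (Dg(q_n)(δ_n)) ], where D₁L_d and D₂L_d denote the partial Fréchet derivatives of L_d with respect to its first and second arguments and Dg(q_n) is the Fréchet derivative of g at q_n. -/

import Mathlib

open Matrix Finset
open Fin.NatCast

/-- Dot product with a fixed vector as a continuous linear map. -/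
noncomputable def dotCLM {l : ℕ} (v : Fin l → ℝ) : (Fin l → ℝ) →L[ℝ] ℝ :=
  ∑ i, v i • ContinuousLinearMap.proj i

lemma dotCLM_apply {l : ℕ} (v w : Fin l → ℝ) : dotCLM v w = v ⬝ᵥ w := by
  simp [dotCLM, dotProduct, ContinuousLinearMap.sum_apply]

/-- Partial derivative w.r.t. the first variable. -/
lemma partial_fst {E F : Type*} [NormedAddCommGroup E] [NormedSpace ℝ E]
    [NormedAddCommGroup F] [NormedSpace ℝ F]
    (f : E × F → ℝ) (hf : Differentiable ℝ f) (a : E) (b : F) (x₀ : E) :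
    fderiv ℝ (fun x => f (x, b)) a x₀ = fderiv ℝ f (a, b) (x₀, 0) := by
  have h := ((hf (a, b)).hasFDerivAt.comp a (hasFDerivAt_prodMk_left (𝕜 := ℝ) a b)).fderiv
  rw [show (fun x => f (x, b)) = f ∘ (fun x => (x, b)) from rfl, h]
  rfl

/-- Partial derivative w.r.t. the second variable. -/
lemma partial_snd {E F : Type*} [NormedAddCommGroup E] [NormedSpace ℝ E]
    [NormedAddCommGroup F] [NormedSpace ℝ F]
    (f : E × F → ℝ) (hf : Differentiable ℝ f) (a : E) (b : F) (y₀ : F) :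
    fderiv ℝ (fun y => f (a, y)) b y₀ = fderiv ℝ f (a, b) (0, y₀) := by
  have h := ((hf (a, b)).hasFDerivAt.comp b (hasFDerivAt_prodMk_right (𝕜 := ℝ) a b)).fderiv
  rw [show (fun y => f (a, y)) = f ∘ (fun y => (a, y)) from rfl, h]
  rfl

/-- Summation by parts identity for the discrete variation. -/
lemma key_sum (N : ℕ) (hN : 1 ≤ N) (u v a : ℕ → ℝ)
    (hu : u 0 = 0) (hv : v (N - 1) = 0) (ha0 : a 0 = 0) (haN : a N = 0) :
    ∑ n ∈ range N, (u n + v n - (1 / 2) * (a n + a (n + 1)))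
      = ∑ n ∈ Icc 1 (N - 1), (u n + v (n - 1) - a n) := by
  obtain ⟨M, rfl⟩ : ∃ M, N = M + 1 := ⟨N - 1, (Nat.succ_pred_eq_of_pos hN).symm⟩
  simp only [Nat.add_sub_cancel] at hv ⊢
  rw [show Icc 1 M = Ico 1 (M + 1) from (Finset.Ico_add_one_right_eq_Icc 1 M),
    Finset.sum_Ico_eq_sum_range]
  simp only [Nat.add_sub_cancel, Nat.add_sub_cancel_left]
  have h1 : ∑ n ∈ range (M + 1), (u n + v n - (1 / 2) * (a n + a (n + 1)))
      = (∑ n ∈ range (M + 1), u n + ∑ n ∈ range (M + 1), v n)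
        - (1 / 2) * (∑ n ∈ range (M + 1), a n + ∑ n ∈ range (M + 1), a (n + 1)) := by
    rw [Finset.sum_sub_distrib, Finset.sum_add_distrib, ← Finset.mul_sum,
      Finset.sum_add_distrib]
  rw [h1, Finset.sum_range_succ' u, Finset.sum_range_succ v, Finset.sum_range_succ' a,
    Finset.sum_range_succ (fun n => a (n + 1)), hu, hv, ha0, haN,
    Finset.sum_sub_distrib, Finset.sum_add_distrib]
  have e1 : ∑ x ∈ range M, u (1 + x) = ∑ x ∈ range M, u (x + 1) :=
    Finset.sum_congr rfl fun k _ => by rw [Nat.add_comm]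
  have e3 : ∑ x ∈ range M, a (1 + x) = ∑ x ∈ range M, a (x + 1) :=
    Finset.sum_congr rfl fun k _ => by rw [Nat.add_comm]
  rw [e1, e3]
  ring

/-- Variation of the discrete action (Equation 13): the discrete action `Sd` is
differentiable at every configuration, and for every variation vanishing at the
endpoints its derivative is the interior sum of partial derivatives of the discrete
Lagrangian minus the multiplier terms. -/
theorem discrete_action_variation (m l N : ℕ) (hN : 2 ≤ N)
    (Ld : (Fin m → ℝ) × (Fin m → ℝ) → ℝ) (hLd : Differentiable ℝ Ld)
    (g : (Fin m → ℝ) → (Fin l → ℝ)) (hg : Differentiable ℝ g)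
    (lam : ℕ → Fin l → ℝ)
    (Sd : (Fin (N + 1) → Fin m → ℝ) → ℝ)
    (hSd : Sd = fun q => ∑ n ∈ range N,
      (Ld (q n, q (n + 1))
        - (1 / 2) * (lam n ⬝ᵥ g (q n) + lam (n + 1) ⬝ᵥ g (q (n + 1)))))
    (q : Fin (N + 1) → Fin m → ℝ) :
    DifferentiableAt ℝ Sd q ∧
    ∀ δ : Fin (N + 1) → Fin m → ℝ, δ 0 = 0 → δ (N : Fin (N + 1)) = 0 →
      fderiv ℝ Sd q δ = ∑ n ∈ Icc 1 (N - 1),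
        (fderiv ℝ (fun x => Ld (x, q (n + 1))) (q n) (δ n)
          + fderiv ℝ (fun y => Ld (q (n - 1), y)) (q n) (δ n)
          - lam n ⬝ᵥ fderiv ℝ g (q n) (δ n)) := by
  classical
  have hcast : ∀ n : ℕ, ((n + 1 : ℕ) : Fin (N + 1)) = (n : Fin (N + 1)) + 1 := by
    intro n; push_cast; ring
  have hproj : ∀ i : Fin (N + 1),
      HasFDerivAt (fun q : Fin (N + 1) → Fin m → ℝ => q i)
        (ContinuousLinearMap.proj (R := ℝ) (φ := fun _ : Fin (N + 1) => Fin m → ℝ) i) q :=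
    fun i => by exact (ContinuousLinearMap.proj (R := ℝ) (φ := fun _ : Fin (N + 1) => Fin m → ℝ) i).hasFDerivAt
  have hdot : ∀ (k : ℕ) (i : Fin (N + 1)),
      HasFDerivAt (fun q : Fin (N + 1) → Fin m → ℝ => lam k ⬝ᵥ g (q i))
      ((dotCLM (lam k)).comp ((fderiv ℝ g (q i)).comp
        (ContinuousLinearMap.proj (R := ℝ) (φ := fun _ : Fin (N + 1) => Fin m → ℝ) i))) q := by
    intro k i
    have h : HasFDerivAt (fun q : Fin (N + 1) → Fin m → ℝ => dotCLM (lam k) (g (q i)))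
        ((dotCLM (lam k)).comp ((fderiv ℝ g (q i)).comp
          (ContinuousLinearMap.proj (R := ℝ) (φ := fun _ : Fin (N + 1) => Fin m → ℝ) i))) q :=
      (dotCLM (lam k)).hasFDerivAt.comp q
        (((hg _).hasFDerivAt).comp q (hproj i))
    have heq : (fun q : Fin (N + 1) → Fin m → ℝ => lam k ⬝ᵥ g (q i))
        = fun q : Fin (N + 1) → Fin m → ℝ => dotCLM (lam k) (g (q i)) := by
      funext q; rw [dotCLM_apply]
    rw [heq]
    exact h
  have hpair : ∀ n : ℕ,
      HasFDerivAt (fun q : Fin (N + 1) → Fin m → ℝ => Ld (q n, q (n + 1)))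
      ((fderiv ℝ Ld (q n, q (n + 1))).comp
        ((ContinuousLinearMap.proj (R := ℝ) (φ := fun _ : Fin (N + 1) => Fin m → ℝ)
            ((n : ℕ) : Fin (N + 1))).prod
          (ContinuousLinearMap.proj (R := ℝ) (φ := fun _ : Fin (N + 1) => Fin m → ℝ)
            (((n : ℕ) : Fin (N + 1)) + 1)))) q := by
    intro n
    exact (hLd _).hasFDerivAt.comp q ((hproj _).prodMk (hproj _))
  set T : ℕ → (Fin (N + 1) → Fin m → ℝ) →L[ℝ] ℝ := fun n =>
    (fderiv ℝ Ld (q n, q ((n : Fin (N + 1)) + 1))).comp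
        ((ContinuousLinearMap.proj (R := ℝ) (φ := fun _ : Fin (N + 1) => Fin m → ℝ)
            ((n : ℕ) : Fin (N + 1))).prod
          (ContinuousLinearMap.proj (R := ℝ) (φ := fun _ : Fin (N + 1) => Fin m → ℝ)
            (((n : ℕ) : Fin (N + 1)) + 1)))
      - (1 / 2 : ℝ) •
        ((dotCLM (lam n)).comp ((fderiv ℝ g (q n)).comp
          (ContinuousLinearMap.proj (R := ℝ) (φ := fun _ : Fin (N + 1) => Fin m → ℝ)
            ((n : ℕ) : Fin (N + 1))))
        + (dotCLM (lam (n + 1))).comp ((fderiv ℝ g (q ((n : Fin (N + 1)) + 1))).comp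
          (ContinuousLinearMap.proj (R := ℝ) (φ := fun _ : Fin (N + 1) => Fin m → ℝ)
            (((n : ℕ) : Fin (N + 1)) + 1)))) with hT
  have hS : HasFDerivAt Sd (∑ n ∈ range N, T n) q := by
    rw [hSd]
    exact HasFDerivAt.fun_sum fun n _ =>
      (hpair n).sub (((hdot n _).add (hdot (n + 1) _)).const_mul (1 / 2))
  refine ⟨hS.differentiableAt, fun δ hδ0 hδN => ?_⟩
  rw [hS.fderiv]
  have happly : (∑ n ∈ range N, T n) δ = ∑ n ∈ range N,
      (fderiv ℝ Ld (q n, q ((n : Fin (N + 1)) + 1)) (δ n, 0)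
        + fderiv ℝ Ld (q n, q ((n : Fin (N + 1)) + 1)) (0, δ ((n : Fin (N + 1)) + 1))
        - (1 / 2) * (lam n ⬝ᵥ fderiv ℝ g (q n) (δ n)
          + lam (n + 1) ⬝ᵥ fderiv ℝ g (q ((n : Fin (N + 1)) + 1))
              (δ ((n : Fin (N + 1)) + 1)))) := by
    rw [ContinuousLinearMap.sum_apply]
    refine Finset.sum_congr rfl fun n _ => ?_
    have hsplit : fderiv ℝ Ld (q n, q ((n : Fin (N + 1)) + 1))
          (δ n, δ ((n : Fin (N + 1)) + 1))
        = fderiv ℝ Ld (q n, q ((n : Fin (N + 1)) + 1)) (δ n, 0)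
          + fderiv ℝ Ld (q n, q ((n : Fin (N + 1)) + 1)) (0, δ ((n : Fin (N + 1)) + 1)) := by
      rw [← map_add]
      congr 1
      simp [Prod.ext_iff]
    simp only [hT, ContinuousLinearMap.sub_apply, ContinuousLinearMap.comp_apply,
      ContinuousLinearMap.smul_apply, ContinuousLinearMap.add_apply,
      ContinuousLinearMap.prod_apply, ContinuousLinearMap.proj_apply,
      dotCLM_apply, smul_eq_mul]
    rw [hsplit]
  rw [happly]
  have hN1 : 1 ≤ N := le_trans (by norm_num) hN
  have hδ0' : δ ((0 : ℕ) : Fin (N + 1)) = 0 := by rw [Nat.cast_zero, hδ0]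
  have hzz : ((0 : Fin m → ℝ), (0 : Fin m → ℝ)) = (0 : (Fin m → ℝ) × (Fin m → ℝ)) := rfl
  have hstep : ∀ n : ℕ,
      (fderiv ℝ Ld (q n, q ((n : Fin (N + 1)) + 1)) (δ n, 0)
        + fderiv ℝ Ld (q n, q ((n : Fin (N + 1)) + 1)) (0, δ ((n : Fin (N + 1)) + 1))
        - (1 / 2) * (lam n ⬝ᵥ fderiv ℝ g (q n) (δ n)
          + lam (n + 1) ⬝ᵥ fderiv ℝ g (q ((n : Fin (N + 1)) + 1))
              (δ ((n : Fin (N + 1)) + 1))))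
      = (fun n : ℕ => fderiv ℝ Ld (q n, q ((n : Fin (N + 1)) + 1)) (δ n, 0)) n
        + (fun n : ℕ => fderiv ℝ Ld (q n, q ((n : Fin (N + 1)) + 1))
            (0, δ ((n : Fin (N + 1)) + 1))) n
        - (1 / 2) * ((fun n : ℕ => lam n ⬝ᵥ fderiv ℝ g (q n) (δ n)) n
          + (fun n : ℕ => lam n ⬝ᵥ fderiv ℝ g (q n) (δ n)) (n + 1)) := by
    intro n
    simp only [hcast n]
  calc ∑ n ∈ range N,
      (fderiv ℝ Ld (q n, q ((n : Fin (N + 1)) + 1)) (δ n, 0)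
        + fderiv ℝ Ld (q n, q ((n : Fin (N + 1)) + 1)) (0, δ ((n : Fin (N + 1)) + 1))
        - (1 / 2) * (lam n ⬝ᵥ fderiv ℝ g (q n) (δ n)
          + lam (n + 1) ⬝ᵥ fderiv ℝ g (q ((n : Fin (N + 1)) + 1))
              (δ ((n : Fin (N + 1)) + 1))))
      = ∑ n ∈ Icc 1 (N - 1),
        ((fun n : ℕ => fderiv ℝ Ld (q n, q ((n : Fin (N + 1)) + 1)) (δ n, 0)) n
          + (fun n : ℕ => fderiv ℝ Ld (q n, q ((n : Fin (N + 1)) + 1))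
              (0, δ ((n : Fin (N + 1)) + 1))) (n - 1)
          - (fun n : ℕ => lam n ⬝ᵥ fderiv ℝ g (q n) (δ n)) n) := by
        rw [Finset.sum_congr rfl fun n _ => hstep n]
        refine key_sum N hN1 _ _ _ ?_ ?_ ?_ ?_
        · simp only [hδ0', hzz, map_zero]
        · have h1 : ((N - 1 : ℕ) : Fin (N + 1)) + 1 = ((N : ℕ) : Fin (N + 1)) := by
            rw [← hcast, Nat.sub_add_cancel hN1]
          simp only [h1, hδN, hzz, map_zero]
        · simp only [hδ0', map_zero, dotProduct_zero]
        · simp only [hδN, map_zero, dotProduct_zero]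
    _ = ∑ n ∈ Icc 1 (N - 1),
        (fderiv ℝ (fun x => Ld (x, q ((n : Fin (N + 1)) + 1))) (q n) (δ n)
          + fderiv ℝ (fun y => Ld (q ((n : Fin (N + 1)) - 1), y)) (q n) (δ n)
          - lam n ⬝ᵥ fderiv ℝ g (q n) (δ n)) := by
        refine Finset.sum_congr rfl fun n hn => ?_
        have hn1 : 1 ≤ n := (Finset.mem_Icc.mp hn).1
        have hfin : ((n - 1 : ℕ) : Fin (N + 1)) + 1 = ((n : ℕ) : Fin (N + 1)) := by
          rw [← hcast, Nat.sub_add_cancel hn1]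
        have hfin' : ((n : ℕ) : Fin (N + 1)) - 1 = ((n - 1 : ℕ) : Fin (N + 1)) := by
          rw [← hfin, add_sub_cancel_right]
        simp only [hfin, hfin', partial_fst Ld hLd, partial_snd Ld hLd]
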